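/- Let A, B, C, D be posets with monotone maps f : A → B, g : A → C, u : B → D, v : C → D satisfying u ∘ f ≤ v ∘ g pointwise. Suppose f and v have left adjoints f⁻ : B → A and v⁻ : D → C. Then the square has the interpolation property (for all b ∈ B, c ∈ C with u(b) ≤ v(c) there exists a ∈ A with b ≤ f(a) and g(a) ≤ c) if and only if g ∘ f⁻ = v⁻ ∘ u. -/
import Mathlib


/-- For a lax commutative square of posets `u ∘ f ≤ v ∘ g`, if `f` and `v`
have left adjoints `f⁻` and `v⁻`, then the square has the interpolation property iff
`g ∘ f⁻ = v⁻ ∘ u` (the Beck–Chevalley condition). -/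
theorem stmt_3 {A B C D : Type*} [PartialOrder A] [PartialOrder B] [PartialOrder C]
    [PartialOrder D]
    (f : A → B) (g : A → C) (u : B → D) (v : C → D)
    (hf : Monotone f) (hg : Monotone g) (hu : Monotone u) (hv : Monotone v)
    (hlax : ∀ a : A, u (f a) ≤ v (g a))
    (f' : B → A) (v' : D → C)
    (hf' : GaloisConnection f' f) (hv' : GaloisConnection v' v) :
    (∀ (b : B) (c : C), u b ≤ v c → ∃ a : A, b ≤ f a ∧ g a ≤ c) ↔
      ∀ b : B, g (f' b) = v' (u b) := by
  constructor
  · intro h b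
    obtain ⟨a, hba, hac⟩ := h b (v' (u b)) (hv'.le_u_l (u b))
    refine le_antisymm (le_trans (hg (hf'.l_le hba)) hac) ?_
    exact hv'.l_le (le_trans (hu (hf'.le_u_l b)) (hlax (f' b)))
  · intro h b c hbc
    exact ⟨f' b, hf'.le_u_l b, (h b) ▸ hv'.l_le hbc⟩
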